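/- Let Σ be a finite alphabet, R a positive integer, and A : Σ* → ℚ a function. Suppose there is a function cut : Σ^R → Σ^{<R} × ℚ such that for every word u of length R, writing cut(u) = (u', d), we have A(u·v) = d · A(u'·v) for every v ∈ Σ*. Then there exists a deterministic weighted automaton D with state set {words of length < R} computing A: concretely, define a deterministic transition function that appends letters and applies cut when length R is reached, with final weight A(u) in state u; then the unique run of D on any word w has value A(w). -/

import Mathlib

/-- Run the deterministic automaton whose states are words: starting from the
empty word with weight `1`, process the input with the transition function `δ`,
accumulating the product of the transition weights. -/
def detRun {α : Type} (δ : List α → α → List α × ℚ) (w : List α) : List α × ℚ :=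
  w.foldl (fun s a => ((δ s.1 a).1, s.2 * (δ s.1 a).2)) ([], 1)

lemma detRun_append_singleton {α : Type} (δ : List α → α → List α × ℚ)
    (w : List α) (a : α) :
    detRun δ (w ++ [a]) =
      ((δ (detRun δ w).1 a).1, (detRun δ w).2 * (δ (detRun δ w).1 a).2) := by
  simp [detRun, List.foldl_append]

theorem stmt_19 (α : Type) (R : ℕ) (hR : 0 < R) (A : List α → ℚ)
    (cut : List α → List α × ℚ)
    (hcut : ∀ u : List α, u.length = R →
      (cut u).1.length < R ∧ ∀ v : List α, A (u ++ v) = (cut u).2 * A ((cut u).1 ++ v)) :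
    ∃ δ : List α → α → List α × ℚ,
      (∀ u : List α, ∀ a : α, (δ u a).1.length < R) ∧
      (∀ w v : List α, A (w ++ v) = (detRun δ w).2 * A ((detRun δ w).1 ++ v)) ∧
      (∀ w : List α, (detRun δ w).2 * A ((detRun δ w).1) = A w) := by
  classical
  set δ : List α → α → List α × ℚ := fun u a =>
    if u.length + 1 < R then (u ++ [a], 1) else cut ((u ++ [a]).take R) with hδ
  have hδ' : ∀ u a, δ u a = if u.length + 1 < R then (u ++ [a], 1) else cut ((u ++ [a]).take R) :=
    fun _ _ => rfl
  have hlen : ∀ u : List α, ∀ a : α, (δ u a).1.length < R := by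
    intro u a
    by_cases h : u.length + 1 < R
    · simp [hδ, h]
    · have htake : ((u ++ [a]).take R).length = R := by
        simp [List.length_take]
        omega
      simp [hδ, h]
      exact (hcut _ htake).1
  have key : ∀ w : List α, (detRun δ w).1.length < R ∧
      ∀ v : List α, A (w ++ v) = (detRun δ w).2 * A ((detRun δ w).1 ++ v) := by
    intro w
    induction w using List.reverseRecOn with
    | nil => simp [detRun, hR]
    | append_singleton w a ih =>
      obtain ⟨ih1, ih2⟩ := ih
      rw [detRun_append_singleton]
      by_cases h : (detRun δ w).1.length + 1 < R
      · constructor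
        · simp [hδ', h]
        · intro v
          simp only [hδ', if_pos h]
          have := ih2 ([a] ++ v)
          simpa [mul_assoc] using this
      · have htake : (((detRun δ w).1 ++ [a]).take R).length = R := by
          simp [List.length_take]
          omega
        have heq : ((detRun δ w).1 ++ [a]).take R = (detRun δ w).1 ++ [a] := by
          apply List.take_of_length_le
          simp; omega
        obtain ⟨hc1, hc2⟩ := hcut _ htake
        constructor
        · simp only [hδ', if_neg h]
          exact hc1
        · intro v
          simp only [hδ', if_neg h]
          have h1 := ih2 ([a] ++ v)
          have h2 := hc2 v
          rw [heq] at h2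
          rw [heq]
          rw [show w ++ [a] ++ v = w ++ ([a] ++ v) by simp, h1]
          rw [show (detRun δ w).1 ++ ([a] ++ v) = (detRun δ w).1 ++ [a] ++ v by simp, h2]
          rw [mul_assoc]
  refine ⟨δ, hlen, fun w v => (key w).2 v, fun w => ?_⟩
  have := (key w).2 []
  simp at this
  simp [← this]
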